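/- (Extension theorem) Let (V, #, ∗) be a finite-dimensional hypervector space over a hyperfield (F, ⊕, ·), and let S = {α₁, α₂, ..., αₙ} be a linearly independent set of vectors in V. Then either S is a basis of V, or S can be extended to a basis of V; i.e., there exists a finite set T ⊇ S that is a basis of V. -/

import Mathlib

universe u v

/-- A hyperfield: `(F, ⊕, ·)` where `(F, ⊕)` is a commutative hypergroup with zero
element `zero` (each `a` having a unique additive inverse `neg a`, and satisfying
reversibility), and `·` is an associative commutative multiplication distributing
over `⊕` from both sides, with `a·0 = 0·a = 0`, an identity `one` and multiplicative
inverses for nonzero elements. -/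
structure Hyperfield (F : Type u) where
  add : F → F → Set F
  add_nonempty : ∀ a b, (add a b).Nonempty
  add_comm : ∀ a b, add a b = add b a
  add_assoc : ∀ a b c, (⋃ t ∈ add b c, add a t) = ⋃ t ∈ add a b, add t c
  zero : F
  neg : F → F
  neg_spec : ∀ a, zero ∈ add a (neg a) ∧ zero ∈ add (neg a) a
  neg_unique : ∀ a b, zero ∈ add a b → zero ∈ add b a → b = neg a
  reversible : ∀ a b c, a ∈ add b c → b ∈ add a (neg c)
  mul : F → F → F
  mul_assoc : ∀ a b c, mul (mul a b) c = mul a (mul b c)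
  left_distrib : ∀ a b c, (mul a) '' (add b c) = add (mul a b) (mul a c)
  right_distrib : ∀ a b c, (fun t => mul t a) '' (add b c) = add (mul b a) (mul c a)
  mul_zero : ∀ a, mul a zero = zero
  zero_mul : ∀ a, mul zero a = zero
  one : F
  mul_one : ∀ a, mul a one = a
  one_ne_zero : one ≠ zero
  mul_comm : ∀ a b, mul a b = mul b a
  exists_inv : ∀ a, a ≠ zero → ∃ b, mul a b = one

/-- A hypervector space `(V, #, ∗)` over a hyperfield `K` on `F`:
`(V, #)` is a commutative hypergroup with zero vector `vzero`, and
`∗ : F × V → P*(V)` satisfies (i) `a ∗ (α # β) ⊆ a∗α # a∗β`,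
(ii) `(a ⊕ b) ∗ α ⊆ a∗α # b∗α`, (iii) `(a·b) ∗ α = a ∗ (b ∗ α)`,
(iv) `1 ∗ α = {α}` and `0 ∗ α = {θ}`. -/
structure HypervectorSpace (F : Type u) (V : Type v) (K : Hyperfield F) where
  vadd : V → V → Set V
  vadd_nonempty : ∀ x y, (vadd x y).Nonempty
  vadd_comm : ∀ x y, vadd x y = vadd y x
  vadd_assoc : ∀ x y z, (⋃ t ∈ vadd y z, vadd x t) = ⋃ t ∈ vadd x y, vadd t z
  vzero : V
  vneg : V → V
  vneg_spec : ∀ x, vzero ∈ vadd x (vneg x) ∧ vzero ∈ vadd (vneg x) x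
  vneg_unique : ∀ x y, vzero ∈ vadd x y → vzero ∈ vadd y x → y = vneg x
  vreversible : ∀ x y z, x ∈ vadd y z → y ∈ vadd x (vneg z)
  smul : F → V → Set V
  smul_nonempty : ∀ a x, (smul a x).Nonempty
  smul_vadd : ∀ a x y, (⋃ t ∈ vadd x y, smul a t) ⊆ ⋃ u ∈ smul a x, ⋃ w ∈ smul a y, vadd u w
  add_smul : ∀ a b x, (⋃ t ∈ K.add a b, smul t x) ⊆ ⋃ u ∈ smul a x, ⋃ w ∈ smul b x, vadd u w
  mul_smul : ∀ a b x, smul (K.mul a b) x = ⋃ t ∈ smul b x, smul a t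
  one_smul : ∀ x, smul K.one x = {x}
  zero_smul : ∀ x, smul K.zero x = {vzero}

namespace HypervectorSpace

variable {F : Type u} {V : Type v} {K : Hyperfield F}

/-- The hyperoperation `#` extended to subsets: `A # B = ⋃_{a ∈ A, b ∈ B} a # b`. -/
def setVadd (H : HypervectorSpace F V K) (A B : Set V) : Set V :=
  ⋃ a ∈ A, ⋃ b ∈ B, H.vadd a b

/-- A subset `W` of a hypervector space is a hypersubspace if it is closed under `#`
and `∗`, contains the zero vector, and contains additive inverses. -/
def IsHypersubspace (H : HypervectorSpace F V K) (W : Set V) : Prop :=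
  (∀ α ∈ W, ∀ β ∈ W, H.vadd α β ⊆ W) ∧
  (∀ a : F, ∀ α ∈ W, H.smul a α ⊆ W) ∧
  H.vzero ∈ W ∧
  (∀ α ∈ W, H.vneg α ∈ W)

/-- Iterated hyperoperation `A₁ # A₂ # ... # Aₙ` on a list of subsets
(by convention the empty hypersum is `{θ}`). -/
def hsum (H : HypervectorSpace F V K) : List (Set V) → Set V
  | [] => {H.vzero}
  | [A] => A
  | A :: B :: rest => H.setVadd A (HypervectorSpace.hsum H (B :: rest))

/-- The linear combination set `a₁∗α₁ # a₂∗α₂ # ... # aₙ∗αₙ`. -/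
def lincomb (H : HypervectorSpace F V K) {n : ℕ} (a : Fin n → F) (α : Fin n → V) : Set V :=
  H.hsum (List.ofFn fun i => H.smul (a i) (α i))

/-- The hyperlinear span `HL(α₁, ..., αₙ) = ⋃ { a₁∗α₁ # ... # aₙ∗αₙ : a₁, ..., aₙ ∈ F }`. -/
def HL (H : HypervectorSpace F V K) {n : ℕ} (α : Fin n → V) : Set V :=
  ⋃ a : Fin n → F, H.lincomb a α

/-- The family `α₁, ..., αₙ` is linearly dependent if `θ ∈ a₁∗α₁ # ... # aₙ∗αₙ`
for some scalars `a₁, ..., aₙ`, not all zero. -/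
def LinDep (H : HypervectorSpace F V K) {n : ℕ} (α : Fin n → V) : Prop :=
  ∃ a : Fin n → F, (∃ i, a i ≠ K.zero) ∧ H.vzero ∈ H.lincomb a α

/-- Strongly left distributive: equality `(a ⊕ b) ∗ α = a∗α # b∗α`. -/
def StronglyLeftDistrib (H : HypervectorSpace F V K) : Prop :=
  ∀ (a b : F) (x : V),
    (⋃ t ∈ K.add a b, H.smul t x) = ⋃ u ∈ H.smul a x, ⋃ w ∈ H.smul b x, H.vadd u w

/-- The set of all finite linear combinations of elements of `S`. -/
def HLSet (H : HypervectorSpace F V K) (S : Set V) : Set V :=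
  ⋃ n : ℕ, ⋃ β : Fin n → V, ⋃ (_ : ∀ i, β i ∈ S), H.HL β

/-- A set `S` is linearly independent if every finite family of distinct elements
of `S` is linearly independent. -/
def LinIndepSet (H : HypervectorSpace F V K) (S : Set V) : Prop :=
  ∀ (n : ℕ) (β : Fin n → V), Function.Injective β → (∀ i, β i ∈ S) → ¬ H.LinDep β

/-- `S` is a basis of the hypersubspace `U`: `S ⊆ U`, `S` is linearly independent,
and every element of `U` is a finite linear combination of elements of `S`. -/
def IsBasisOf (H : HypervectorSpace F V K) (S U : Set V) : Prop :=
  S ⊆ U ∧ H.LinIndepSet S ∧ U ⊆ H.HLSet S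

end HypervectorSpace


namespace HypervectorSpace

variable {F : Type u} {V : Type v} {K : Hyperfield F}

section Aux
variable (H : HypervectorSpace F V K)

/-! ### Basic hypergroup facts -/

lemma vneg_vneg (w : V) : H.vneg (H.vneg w) = w :=
  ((H.vneg_unique (H.vneg w) w (H.vneg_spec w).2 (H.vneg_spec w).1)).symm

lemma vadd_vzero_left (w : V) : H.vadd H.vzero w = {w} := by
  have key : ∀ x ∈ H.vadd H.vzero w, x = w := by
    intro x hx
    have h1 : H.vzero ∈ H.vadd x (H.vneg w) := H.vreversible x H.vzero w hx
    have h2 : H.vzero ∈ H.vadd (H.vneg w) x := by rwa [H.vadd_comm] at h1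
    have h3 : x = H.vneg (H.vneg w) := H.vneg_unique (H.vneg w) x h2 h1
    rw [h3, H.vneg_vneg]
  ext x
  constructor
  · intro hx; exact key x hx
  · intro hx
    obtain ⟨y, hy⟩ := H.vadd_nonempty H.vzero w
    have hw : w ∈ H.vadd H.vzero w := by rwa [key y hy] at hy
    rw [Set.mem_singleton_iff] at hx
    rw [hx]; exact hw

lemma vneg_vzero : H.vneg H.vzero = H.vzero := by
  have h : H.vzero ∈ H.vadd H.vzero H.vzero := by
    rw [H.vadd_vzero_left]; exact rfl
  exact (H.vneg_unique H.vzero H.vzero h h).symm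

lemma vneg_mem_vadd {u v w : V} (h : w ∈ H.vadd u v) :
    H.vneg w ∈ H.vadd (H.vneg u) (H.vneg v) := by
  have h1 : u ∈ H.vadd w (H.vneg v) := H.vreversible w u v h
  have h2 : u ∈ H.vadd (H.vneg v) w := by rwa [H.vadd_comm] at h1
  have h3 : H.vneg v ∈ H.vadd u (H.vneg w) := H.vreversible u (H.vneg v) w h2
  have h4 : H.vneg v ∈ H.vadd (H.vneg w) u := by rwa [H.vadd_comm] at h3
  have h5 : H.vneg w ∈ H.vadd (H.vneg v) (H.vneg u) :=
    H.vreversible (H.vneg v) (H.vneg w) u h4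
  rwa [H.vadd_comm] at h5

/-! ### `setVadd` facts -/

lemma mem_setVadd {A B : Set V} {x : V} :
    x ∈ H.setVadd A B ↔ ∃ u ∈ A, ∃ w ∈ B, x ∈ H.vadd u w := by
  simp [setVadd]

lemma setVadd_comm (A B : Set V) : H.setVadd A B = H.setVadd B A := by
  ext x
  simp only [H.mem_setVadd]
  constructor
  · rintro ⟨u, hu, w, hw, hx⟩; exact ⟨w, hw, u, hu, by rwa [H.vadd_comm]⟩
  · rintro ⟨u, hu, w, hw, hx⟩; exact ⟨w, hw, u, hu, by rwa [H.vadd_comm]⟩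

lemma setVadd_assoc (A B C : Set V) :
    H.setVadd (H.setVadd A B) C = H.setVadd A (H.setVadd B C) := by
  ext x
  simp only [H.mem_setVadd]
  constructor
  · rintro ⟨t, ⟨a, ha, b, hb, htab⟩, c, hc, hx⟩
    have h1 : x ∈ ⋃ s ∈ H.vadd a b, H.vadd s c := Set.mem_biUnion htab hx
    rw [← H.vadd_assoc] at h1
    obtain ⟨s, hs, hx'⟩ := Set.mem_iUnion₂.1 h1
    exact ⟨a, ha, s, ⟨b, hb, c, hc, hs⟩, hx'⟩
  · rintro ⟨a, ha, s, ⟨b, hb, c, hc, hs⟩, hx⟩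
    have h1 : x ∈ ⋃ s ∈ H.vadd b c, H.vadd a s := Set.mem_biUnion hs hx
    rw [H.vadd_assoc] at h1
    obtain ⟨t, ht, hx'⟩ := Set.mem_iUnion₂.1 h1
    exact ⟨t, ⟨a, ha, b, hb, ht⟩, c, hc, hx'⟩

lemma setVadd_vzero_left (A : Set V) : H.setVadd {H.vzero} A = A := by
  ext x
  simp only [H.mem_setVadd, Set.mem_singleton_iff]
  constructor
  · rintro ⟨u, rfl, w, hw, hx⟩
    rw [H.vadd_vzero_left, Set.mem_singleton_iff] at hx
    rwa [hx]
  · intro hx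
    exact ⟨H.vzero, rfl, x, hx, by rw [H.vadd_vzero_left]; exact rfl⟩

end Aux

/-! ### A commutative monoid structure -/

/-- Type synonym for `Set V` on which `setVadd` becomes a commutative monoid. -/
def Mn (_H : HypervectorSpace F V K) : Type v := Set V

instance (H : HypervectorSpace F V K) : Membership V H.Mn :=
  inferInstanceAs (Membership V (Set V))

instance (H : HypervectorSpace F V K) : CommMonoid H.Mn where
  mul := H.setVadd
  one := ({H.vzero} : Set V)
  mul_assoc := H.setVadd_assoc
  one_mul := H.setVadd_vzero_left
  mul_one A := by
    show H.setVadd A {H.vzero} = A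
    exact (H.setVadd_comm A {H.vzero}).trans (H.setVadd_vzero_left A)
  mul_comm := H.setVadd_comm

section Aux2
variable (H : HypervectorSpace F V K)

lemma mul_def (A B : H.Mn) : A * B = H.setVadd A B := rfl

lemma one_def : (1 : H.Mn) = ({H.vzero} : Set V) := rfl

lemma hsum_cons (A : Set V) (L : List (Set V)) :
    H.hsum (A :: L) = H.setVadd A (H.hsum L) := by
  cases L with
  | nil =>
    show A = H.setVadd A {H.vzero}
    rw [H.setVadd_comm]
    exact (H.setVadd_vzero_left A).symm
  | cons B rest => rfl

lemma hsum_eq_prod (L : List H.Mn) : H.hsum L = L.prod := by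
  induction L with
  | nil => rfl
  | cons A rest ih =>
    rw [List.prod_cons, ← ih]
    exact H.hsum_cons A rest

/-- `smul` as an element of the monoid. -/
def sm (a : F) (x : V) : H.Mn := H.smul a x

/-- Linear combination as a product in the monoid. -/
def P {n : ℕ} (a : Fin n → F) (α : Fin n → V) : H.Mn := ∏ i, H.sm (a i) (α i)

lemma lincomb_eq {n : ℕ} (a : Fin n → F) (α : Fin n → V) :
    H.lincomb a α = (H.P a α : Set V) := by
  have h1 : H.lincomb a α = H.hsum (List.ofFn fun i => (H.sm (a i) (α i) : H.Mn)) := rfl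
  rw [h1]; refine (H.hsum_eq_prod _).trans ?_
  exact List.prod_ofFn (f := fun i => (H.sm (a i) (α i) : H.Mn))

lemma smul_vzero (c : F) : H.smul c H.vzero = {H.vzero} := by
  have h := H.mul_smul c K.zero H.vzero
  rw [K.mul_zero, H.zero_smul] at h
  simpa using h.symm

lemma P_zero {a : Fin 0 → F} {α : Fin 0 → V} : H.P a α = (1 : H.Mn) :=
  Fin.prod_univ_zero _

lemma P_succ {n : ℕ} (a : Fin (n+1) → F) (α : Fin (n+1) → V) :
    H.P a α = H.sm (a 0) (α 0) *
      H.P (fun i => a i.succ) (fun i => α i.succ) :=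
  Fin.prod_univ_succ _

lemma mem_one {x : V} (h : x ∈ ((1 : H.Mn) : Set V)) : x = H.vzero := h

lemma vzero_mem_one : H.vzero ∈ ((1 : H.Mn) : Set V) := rfl

/-- Scaling a linear combination. -/
lemma smul_P : ∀ {n : ℕ} {a : Fin n → F} {α : Fin n → V} {x : V},
    x ∈ (H.P a α : Set V) → ∀ c : F,
    H.smul c x ⊆ (H.P (fun i => K.mul c (a i)) α : Set V) := by
  intro n
  induction n with
  | zero =>
    intro a α x hx c
    rw [H.P_zero] at hx
    have hx' : x = H.vzero := H.mem_one hx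
    rw [hx', H.smul_vzero, H.P_zero]
    intro y hy; exact hy
  | succ k ih =>
    intro a α x hx c
    have hd : (H.P a α : Set V) = H.setVadd (H.sm (a 0) (α 0))
        (H.P (fun i => a i.succ) (fun i => α i.succ)) := H.P_succ a α
    rw [hd] at hx
    obtain ⟨u, hu, w, hw, hxv⟩ := H.mem_setVadd.1 hx
    intro y hy
    have h1 : y ∈ ⋃ t ∈ H.vadd u w, H.smul c t := Set.mem_biUnion hxv hy
    have h2 := H.smul_vadd c u w h1
    simp only [Set.mem_iUnion] at h2
    obtain ⟨u', hu', w', hw', hyv⟩ := h2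
    have hu'' : u' ∈ H.smul (K.mul c (a 0)) (α 0) := by
      rw [H.mul_smul]; exact Set.mem_biUnion hu hu'
    have hw'' : w' ∈ (H.P (fun i => K.mul c (a i.succ)) (fun i => α i.succ) : Set V) :=
      ih hw c hw'
    have hd2 : (H.P (fun i => K.mul c (a i)) α : Set V) =
        H.setVadd (H.sm (K.mul c (a 0)) (α 0))
          (H.P (fun i => K.mul c (a i.succ)) (fun i => α i.succ)) :=
      H.P_succ _ _
    rw [hd2]
    exact H.mem_setVadd.2 ⟨u', hu'', w', hw'', hyv⟩

/-! ### Negation facts -/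

lemma vneg_mem_smul_negone (u : V) : H.vneg u ∈ H.smul (K.neg K.one) u := by
  have h0 : K.zero ∈ K.add K.one (K.neg K.one) := (K.neg_spec K.one).1
  have hθ : H.vzero ∈ ⋃ t ∈ K.add K.one (K.neg K.one), H.smul t u :=
    Set.mem_biUnion h0 (by rw [H.zero_smul]; exact rfl)
  have h2 := H.add_smul K.one (K.neg K.one) u hθ
  simp only [Set.mem_iUnion] at h2
  obtain ⟨p, hp, q, hq, h3⟩ := h2
  rw [H.one_smul, Set.mem_singleton_iff] at hp
  rw [hp] at h3
  have h4 : H.vzero ∈ H.vadd q u := by rwa [H.vadd_comm] at h3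
  have h5 : q = H.vneg u := H.vneg_unique u q h3 h4
  rwa [← h5]

lemma neg_smul_mem {a : F} {x u : V} (h : u ∈ H.smul a x) :
    H.vneg u ∈ H.smul (K.neg a) x := by
  have hne : K.neg a = K.mul (K.neg K.one) a := by
    have hd := K.right_distrib a K.one (K.neg K.one)
    have h0 : K.zero ∈ K.add K.one (K.neg K.one) := (K.neg_spec K.one).1
    have h1 : K.zero ∈ K.add (K.mul K.one a) (K.mul (K.neg K.one) a) := by
      rw [← hd]
      exact ⟨K.zero, h0, K.zero_mul a⟩
    rw [K.mul_comm, K.mul_one] at h1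
    have h2 : K.zero ∈ K.add (K.mul (K.neg K.one) a) a := by rwa [K.add_comm] at h1
    exact (K.neg_unique a (K.mul (K.neg K.one) a) h1 h2).symm
  rw [hne, H.mul_smul]
  exact Set.mem_biUnion h (H.vneg_mem_smul_negone u)

lemma neg_P : ∀ {n : ℕ} {a : Fin n → F} {α : Fin n → V} {x : V},
    x ∈ (H.P a α : Set V) →
    H.vneg x ∈ (H.P (fun i => K.neg (a i)) α : Set V) := by
  intro n
  induction n with
  | zero =>
    intro a α x hx
    have hx' : x = H.vzero := by rw [H.P_zero] at hx; exact H.mem_one hx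
    rw [hx', H.vneg_vzero, H.P_zero]
    exact H.vzero_mem_one
  | succ k ih =>
    intro a α x hx
    have hd : (H.P a α : Set V) = H.setVadd (H.sm (a 0) (α 0))
        (H.P (fun i => a i.succ) (fun i => α i.succ)) := H.P_succ a α
    rw [hd] at hx
    obtain ⟨u, hu, w, hw, hxv⟩ := H.mem_setVadd.1 hx
    have hd2 : (H.P (fun i => K.neg (a i)) α : Set V) =
        H.setVadd (H.sm (K.neg (a 0)) (α 0))
          (H.P (fun i => K.neg (a i.succ)) (fun i => α i.succ)) := H.P_succ _ _
    rw [hd2]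
    exact H.mem_setVadd.2 ⟨H.vneg u, H.neg_smul_mem hu, H.vneg w, ih hw,
      H.vneg_mem_vadd hxv⟩

/-! ### HLSet facts -/

lemma mem_HLSet {S : Set V} {x : V} :
    x ∈ H.HLSet S ↔ ∃ (m : ℕ) (β : Fin m → V), (∀ i, β i ∈ S) ∧
      ∃ a : Fin m → F, x ∈ (H.P a β : Set V) := by
  unfold HLSet HL
  simp only [Set.mem_iUnion]
  constructor
  · rintro ⟨m, β, hβ, a, hx⟩
    exact ⟨m, β, hβ, a, by rwa [H.lincomb_eq] at hx⟩
  · rintro ⟨m, β, hβ, a, hx⟩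
    exact ⟨m, β, hβ, a, by rwa [H.lincomb_eq]⟩

lemma HLSet_mono {S T : Set V} (h : S ⊆ T) : H.HLSet S ⊆ H.HLSet T := by
  intro x hx
  obtain ⟨m, β, hβ, a, hx⟩ := H.mem_HLSet.1 hx
  exact H.mem_HLSet.2 ⟨m, β, fun i => h (hβ i), a, hx⟩

lemma mem_HLSet_self {S : Set V} {s : V} (hs : s ∈ S) : s ∈ H.HLSet S := by
  refine H.mem_HLSet.2 ⟨1, fun _ => s, fun _ => hs, fun _ => K.one, ?_⟩
  have h1 : H.P (fun _ : Fin 1 => K.one) (fun _ => s) = H.sm K.one s :=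
    Fin.prod_univ_one _
  rw [h1]
  show s ∈ H.smul K.one s
  rw [H.one_smul]
  exact rfl

lemma vzero_mem_HLSet (S : Set V) : H.vzero ∈ H.HLSet S :=
  H.mem_HLSet.2 ⟨0, fun i => i.elim0, fun i => i.elim0, fun i => i.elim0,
    by rw [H.P_zero]; exact H.vzero_mem_one⟩

lemma P_append {p q : ℕ} (a : Fin p → F) (b : Fin q → F)
    (γ : Fin p → V) (ρ : Fin q → V) :
    H.P (Fin.append a b) (Fin.append γ ρ) = H.P a γ * H.P b ρ := by
  unfold P
  rw [Fin.prod_univ_add]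
  congr 1
  · exact Finset.prod_congr rfl fun i _ => by rw [Fin.append_left, Fin.append_left]
  · exact Finset.prod_congr rfl fun i _ => by rw [Fin.append_right, Fin.append_right]

lemma vadd_subset_HLSet {S : Set V} {u w : V}
    (hu : u ∈ H.HLSet S) (hw : w ∈ H.HLSet S) : H.vadd u w ⊆ H.HLSet S := by
  obtain ⟨p, γ, hγ, a, hu⟩ := H.mem_HLSet.1 hu
  obtain ⟨q, ρ, hρ, b, hw⟩ := H.mem_HLSet.1 hw
  intro y hy
  refine H.mem_HLSet.2 ⟨p + q, Fin.append γ ρ, ?_, Fin.append a b, ?_⟩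
  · intro i
    refine Fin.addCases (motive := fun i => Fin.append γ ρ i ∈ S) ?_ ?_ i
    · intro j; rw [Fin.append_left]; exact hγ j
    · intro j; rw [Fin.append_right]; exact hρ j
  · have h1 : (H.P (Fin.append a b) (Fin.append γ ρ) : Set V) =
        H.setVadd (H.P a γ) (H.P b ρ) := H.P_append a b γ ρ
    rw [h1]
    exact H.mem_setVadd.2 ⟨u, hu, w, hw, hy⟩

lemma comb_mem_HLSet {S : Set V} : ∀ {m : ℕ} (a : Fin m → F) (β : Fin m → V),
    (∀ i, β i ∈ H.HLSet S) → ∀ x, x ∈ (H.P a β : Set V) → x ∈ H.HLSet S := by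
  intro m
  induction m with
  | zero =>
    intro a β _ x hx
    rw [H.P_zero] at hx
    rw [H.mem_one hx]
    exact H.vzero_mem_HLSet S
  | succ k ih =>
    intro a β hβ x hx
    have hd : (H.P a β : Set V) = H.setVadd (H.sm (a 0) (β 0))
        (H.P (fun i => a i.succ) (fun i => β i.succ)) := H.P_succ a β
    rw [hd] at hx
    obtain ⟨u, hu, w, hw, hxv⟩ := H.mem_setVadd.1 hx
    have hw' : w ∈ H.HLSet S := ih _ _ (fun i => hβ i.succ) w hw
    have hu' : u ∈ H.HLSet S := by
      obtain ⟨p, γ, hγ, b, h0⟩ := H.mem_HLSet.1 (hβ 0)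
      exact H.mem_HLSet.2 ⟨p, γ, hγ, _, H.smul_P h0 (a 0) hu⟩
    exact H.vadd_subset_HLSet hu' hw' hxv

lemma HLSet_idem (S : Set V) : H.HLSet (H.HLSet S) ⊆ H.HLSet S := by
  intro x hx
  obtain ⟨m, β, hβ, a, hx⟩ := H.mem_HLSet.1 hx
  exact H.comb_mem_HLSet a β hβ x hx

/-! ### Reindexing -/

lemma P_eq_of {m n' : ℕ} {σ : Fin m → Fin n'} (hinj : Function.Injective σ)
    (a : Fin n' → F) (b : Fin m → F) (α : Fin n' → V)
    (h1 : ∀ i, a (σ i) = b i) (h2 : ∀ j, (∀ i, σ i ≠ j) → a j = K.zero) :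
    H.P a α = H.P b (fun i => α (σ i)) := by
  unfold P
  have e1 : ∏ j ∈ Finset.univ.image σ, H.sm (a j) (α j) = ∏ j, H.sm (a j) (α j) := by
    refine Finset.prod_subset (Finset.subset_univ _) ?_
    intro j _ hj
    have hno : ∀ i, σ i ≠ j := by
      intro i hij
      exact hj (Finset.mem_image.2 ⟨i, Finset.mem_univ i, hij⟩)
    show H.sm (a j) (α j) = 1
    rw [h2 j hno]
    show (H.smul K.zero (α j) : Set V) = ({H.vzero} : Set V)
    exact H.zero_smul (α j)
  have e2 : ∏ j ∈ Finset.univ.image σ, H.sm (a j) (α j) =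
      ∏ i, H.sm (a (σ i)) (α (σ i)) :=
    Finset.prod_image (fun i _ j _ hh => hinj hh)
  rw [← e1, e2]
  exact Finset.prod_congr rfl fun i _ => by rw [h1 i]

lemma linDep_comp {m n' : ℕ} (σ : Fin m → Fin n') (hσ : Function.Injective σ)
    (α : Fin n' → V) (h : H.LinDep (fun i => α (σ i))) : H.LinDep α := by
  classical
  obtain ⟨b, ⟨i₀, hi₀⟩, hmem⟩ := h
  set a : Fin n' → F := fun j => if hh : ∃ i, σ i = j then b hh.choose else K.zero with ha
  have h1 : ∀ i, a (σ i) = b i := by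
    intro i
    have hex : ∃ i', σ i' = σ i := ⟨i, rfl⟩
    have : a (σ i) = b hex.choose := by rw [ha]; exact dif_pos hex
    rw [this]
    exact congrArg b (hσ hex.choose_spec)
  have h2 : ∀ j, (∀ i, σ i ≠ j) → a j = K.zero := by
    intro j hj
    rw [ha]
    exact dif_neg (fun ⟨i, hi⟩ => hj i hi)
  refine ⟨a, ⟨σ i₀, by rw [h1]; exact hi₀⟩, ?_⟩
  rw [H.lincomb_eq, H.P_eq_of hσ a b α h1 h2]
  rwa [H.lincomb_eq] at hmem

lemma linIndep_range {n : ℕ} (α : Fin n → V) (hinj : Function.Injective α)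
    (hind : ¬ H.LinDep α) : H.LinIndepSet (Set.range α) := by
  intro m β hβinj hβmem hdep
  choose σ hσ using fun i => hβmem i
  have hσinj : Function.Injective σ := fun i j h => hβinj (by rw [← hσ i, ← hσ j, h])
  apply hind
  apply H.linDep_comp σ hσinj α
  have hβ : (fun i => α (σ i)) = β := funext hσ
  rwa [hβ]

/-! ### The exchange lemma -/

lemma exch {k : ℕ} (δ : Fin k → V) (β : V) (hdep : H.LinDep (Fin.cons β δ))
    (hind : ¬ H.LinDep δ) : ∃ c : Fin k → F, β ∈ (H.P c δ : Set V) := by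
  obtain ⟨a', ⟨j, hj⟩, hmem⟩ := hdep
  rw [H.lincomb_eq] at hmem
  have hdecomp : (H.P a' (Fin.cons β δ) : Set V) =
      H.setVadd (H.sm (a' 0) β) (H.P (fun i => a' i.succ) δ) := by
    have h0 := H.P_succ a' (Fin.cons β δ)
    simp only [Fin.cons_succ, Fin.cons_zero] at h0
    exact h0
  rw [hdecomp] at hmem
  by_cases hb : a' 0 = K.zero
  · exfalso
    apply hind
    refine ⟨fun i => a' i.succ, ?_, ?_⟩
    · rcases Fin.eq_zero_or_eq_succ j with rfl | ⟨i, rfl⟩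
      · exact absurd hb hj
      · exact ⟨i, hj⟩
    · rw [H.lincomb_eq]
      have h2 : (H.sm (a' 0) β : Set V) = ({H.vzero} : Set V) := by
        show (H.smul (a' 0) β : Set V) = _
        rw [hb]; exact H.zero_smul β
      rw [h2] at hmem
      have h3 := H.setVadd_vzero_left (H.P (fun i => a' i.succ) δ); rw [h3] at hmem
      exact hmem
  · obtain ⟨c, hc⟩ := K.exists_inv _ hb
    obtain ⟨u, hu, w, hw, hx⟩ := H.mem_setVadd.1 hmem
    have hu_eq : u = H.vneg w := by
      have h1 : u ∈ H.vadd H.vzero (H.vneg w) := H.vreversible H.vzero u w hx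
      rw [H.vadd_vzero_left] at h1
      exact h1
    have hnw : H.vneg w ∈ (H.P (fun i => K.neg (a' i.succ)) δ : Set V) := H.neg_P hw
    have hsub : H.smul c u ⊆ (H.P (fun i => K.mul c (K.neg (a' i.succ))) δ : Set V) := by
      rw [hu_eq]
      exact H.smul_P hnw c
    have hβu : β ∈ H.smul c u := by
      have h2 : H.smul (K.mul c (a' 0)) β = ⋃ t ∈ H.smul (a' 0) β, H.smul c t :=
        H.mul_smul c (a' 0) β
      rw [K.mul_comm, hc, H.one_smul] at h2
      have h3 : H.smul c u ⊆ {β} := by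
        rw [h2]
        exact Set.subset_biUnion_of_mem hu
      obtain ⟨y, hy⟩ := H.smul_nonempty c u
      have hyβ : y = β := h3 hy
      rwa [hyβ] at hy
    exact ⟨_, hsub hβu⟩


end Aux2

end HypervectorSpace

/-- Extension theorem: in a finite-dimensional hypervector space, every linearly
independent finite set `S = {α₁, ..., αₙ}` is a basis or can be extended to a basis:
there is a finite basis `T ⊇ S`. -/
theorem HypervectorSpace.extension {F : Type u} {V : Type v}
    {K : Hyperfield F} (H : HypervectorSpace F V K)
    (hfd : ∃ S : Set V, S.Finite ∧ H.LinIndepSet S ∧ H.HLSet S = Set.univ)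
    {n : ℕ} (α : Fin n → V) (hinj : Function.Injective α)
    (hind : ¬ H.LinDep α) :
    ∃ T : Set V, T.Finite ∧ Set.range α ⊆ T ∧
      H.LinIndepSet T ∧ H.HLSet T = Set.univ := by
  classical
  obtain ⟨S, hSfin, hSind, hSspan⟩ := hfd
  have main : ∀ (s : Finset V) (T : Set V), T.Finite → H.LinIndepSet T →
      ∃ T' : Set V, T'.Finite ∧ T ⊆ T' ∧ H.LinIndepSet T' ∧ ↑s ⊆ H.HLSet T' := by
    intro s
    induction s using Finset.induction_on with
    | empty =>
      intro T hf hi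
      exact ⟨T, hf, subset_rfl, hi, by simp⟩
    | @insert β s hβs ih =>
      intro T hf hi
      obtain ⟨T', h1, h2, h3, h4⟩ := ih T hf hi
      by_cases hcase : H.LinIndepSet (insert β T')
      · refine ⟨insert β T', h1.insert β, h2.trans (Set.subset_insert β T'), hcase, ?_⟩
        rw [Finset.coe_insert]
        exact Set.insert_subset (H.mem_HLSet_self (Set.mem_insert β T'))
          (h4.trans (H.HLSet_mono (Set.subset_insert β T')))
      · have hβT' : β ∉ T' := fun hb => hcase (by rwa [Set.insert_eq_of_mem hb])
        unfold LinIndepSet at hcase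
        push_neg at hcase
        obtain ⟨m, γ, hγinj, hγmem, hγdep⟩ := hcase
        have hex : ∃ i₀, γ i₀ = β := by
          by_contra hno
          push_neg at hno
          exact h3 m γ hγinj
            (fun i => (Set.mem_insert_iff.1 (hγmem i)).resolve_left (hno i)) hγdep
        obtain ⟨i₀, hi₀⟩ := hex
        cases m with
        | zero => exact i₀.elim0
        | succ k =>
          set e := Equiv.swap (0 : Fin (k+1)) i₀ with he
          set γ' : Fin (k+1) → V := fun j => γ (e j) with hγ'
          set δ : Fin k → V := fun i => γ' i.succ with hδ
          have hγ'0 : γ' 0 = β := by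
            rw [hγ']
            show γ (e 0) = β
            rw [he, Equiv.swap_apply_left]
            exact hi₀
          have hγ'inj : Function.Injective γ' := hγinj.comp e.injective
          have hcons : γ' = Fin.cons β δ := by
            funext j
            refine Fin.cases ?_ ?_ j
            · rw [Fin.cons_zero]; exact hγ'0
            · intro i; rw [Fin.cons_succ]
          have hγ'dep : H.LinDep γ' := by
            apply H.linDep_comp e e.injective γ'
            have hco : (fun i => γ' (e i)) = γ := by
              funext i
              show γ (e (e i)) = γ i
              rw [he]
              rw [Equiv.swap_apply_self]
            rwa [hco]
          have hδmem : ∀ i, δ i ∈ T' := by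
            intro i
            have hne : γ' i.succ ≠ β := by
              rw [← hγ'0]
              exact fun hsame => (Fin.succ_ne_zero i) (hγ'inj hsame)
            have hmem' : γ' i.succ ∈ insert β T' := hγmem (e i.succ)
            exact (Set.mem_insert_iff.1 hmem').resolve_left hne
          have hδinj : Function.Injective δ :=
            fun i j hij => Fin.succ_injective _ (hγ'inj hij)
          have hδdep : ¬ H.LinDep δ := h3 k δ hδinj hδmem
          have hdep' : H.LinDep (Fin.cons β δ) := hcons ▸ hγ'dep
          obtain ⟨c, hc⟩ := H.exch δ β hdep' hδdep
          have hβspan : β ∈ H.HLSet T' := H.mem_HLSet.2 ⟨k, δ, hδmem, c, hc⟩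
          refine ⟨T', h1, h2, h3, ?_⟩
          rw [Finset.coe_insert]
          exact Set.insert_subset hβspan h4
  obtain ⟨T, hTfin, hTsub, hTind, hTspan⟩ :=
    main hSfin.toFinset (Set.range α) (Set.finite_range α)
      (H.linIndep_range α hinj hind)
  refine ⟨T, hTfin, hTsub, hTind, ?_⟩
  apply Set.eq_univ_of_univ_subset
  rw [← hSspan]
  intro x hx
  have hS' : S ⊆ H.HLSet T := by rwa [Set.Finite.coe_toFinset] at hTspan
  exact H.HLSet_idem T (H.HLSet_mono hS' hx)
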